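/- Let 𝐭 ∈ T_𝐧, and for each j = 1, …, r define 𝐭_j : ℤ → ℕ₀ by 𝐭_j(i) = 𝐭(i,j). Then: (1) each 𝐭_j belongs to T_{(n_j)} (the set T over the one-term tuple (n_j)), and Σ_{j=1}^r 𝔰(𝐭_j) = 𝔰(𝐭); (2) the map B ↦ (B_1, …, B_r), where B_j = {x + i·n_j : i ∈ ℤ, x ∈ X^𝐧_{i,j}(B)}, is a bijection from 𝔅_𝐭 onto 𝔅_{𝐭_1} × ⋯ × 𝔅_{𝐭_r} (where 𝔅_{𝐭_j} is defined with respect to the tuple (n_j)). -/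

import Mathlib

open scoped BigOperators

/-- A partition: infinite weakly decreasing sequence of non-negative integers that is
eventually zero.  `parts i` denotes `λ_{i+1}` (zero-indexed). -/
structure YPartition where
  parts : ℕ → ℕ
  antitone' : ∀ i j : ℕ, i ≤ j → parts j ≤ parts i
  eventually_zero' : ∃ N : ℕ, ∀ k : ℕ, N ≤ k → parts k = 0

/-- `β_s(λ) = {λ_i + s - i : i ∈ ℕ}` (with `i ≥ 1`; `λ_{i+1} = parts i`). -/
def betaSet (lam : YPartition) (s : ℤ) : Set ℤ :=
  {x : ℤ | ∃ i : ℕ, x = (lam.parts i : ℤ) + s - (i + 1)}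

/-- A set of β-numbers. -/
def IsBetaSet (B : Set ℤ) : Prop :=
  (B ∩ {x : ℤ | 0 ≤ x}).Finite ∧ ({x : ℤ | x < 0} \ B).Finite

/-- `𝔰(B) = |ℕ₀ ∩ B| − |ℤ_{<0} \ B|`. -/
noncomputable def sInv (B : Set ℤ) : ℤ :=
  ((B ∩ {x : ℤ | 0 ≤ x}).ncard : ℤ) - (({x : ℤ | x < 0} \ B).ncard : ℤ)

/-- The Young diagram `[λ] = {(i,j) ∈ ℕ² : j ≤ λ_i}` with `i, j ≥ 1`. -/
def diagram (lam : YPartition) : Set (ℕ × ℕ) :=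
  {p : ℕ × ℕ | 1 ≤ p.1 ∧ 1 ≤ p.2 ∧ p.2 ≤ lam.parts (p.1 - 1)}

/-- `|λ|`, the number of nodes of `λ`. -/
noncomputable def wt (lam : YPartition) : ℕ := (diagram lam).ncard

/-- The `n`-residue of a node `(i,j)`, i.e. the class of `j - i` modulo `n`. -/
def res (n : ℕ) (p : ℕ × ℕ) : ZMod n := (((p.2 : ℤ) - (p.1 : ℤ)) : ZMod n)

def Removable (lam : YPartition) (p : ℕ × ℕ) : Prop :=
  p ∈ diagram lam ∧ ∃ mu : YPartition, diagram mu = diagram lam \ {p}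

def Addable (lam : YPartition) (p : ℕ × ℕ) : Prop :=
  p ∉ diagram lam ∧ ∃ mu : YPartition, diagram mu = diagram lam ∪ {p}

/-- The rim hook `𝔥_{a,b}(λ) = {(i,j) ∈ [λ] : i ≥ a, j ≥ max(b, λ_{i+1})}`. -/
def rimHook (lam : YPartition) (a b : ℕ) : Set (ℕ × ℕ) :=
  {p : ℕ × ℕ | p ∈ diagram lam ∧ a ≤ p.1 ∧ b ≤ p.2 ∧ lam.parts p.1 ≤ p.2}

/-- `μ` is obtained from `λ` by unwrapping a rim hook of size `c`. -/
def UnwrapHook (lam mu : YPartition) (c : ℕ) : Prop :=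
  ∃ a b : ℕ, (a, b) ∈ diagram lam ∧ diagram mu = diagram lam \ rimHook lam a b ∧
    (rimHook lam a b).ncard = c

/-- Strict lexicographic order on partitions: `λ > μ`. -/
def PartGT (lam mu : YPartition) : Prop :=
  ∃ r : ℕ, (∀ k : ℕ, k < r → lam.parts k = mu.parts k) ∧ mu.parts r < lam.parts r

def PartGE (lam mu : YPartition) : Prop := lam = mu ∨ PartGT lam mu

/-- Lexicographic comparison of integer sequences: `a > b`. -/
def SeqGT (a b : ℕ → ℤ) : Prop :=
  ∃ r : ℕ, (∀ k : ℕ, k < r → a k = b k) ∧ b r < a r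

/-- `B > B'` for sets of β-numbers, comparing decreasing enumerations lexicographically. -/
def BetaGT (B B' : Set ℤ) : Prop :=
  ∃ e e' : ℕ → ℤ, StrictAnti e ∧ StrictAnti e' ∧ Set.range e = B ∧ Set.range e' = B' ∧
    SeqGT e e'

def BetaGE (B B' : Set ℤ) : Prop := B = B' ∨ BetaGT B B'

/-- The relation `B →_n B'`. -/
def StepN (n : ℕ) (B B' : Set ℤ) : Prop :=
  ∃ a b : ℤ, ∃ i : ℕ, a ∈ B ∧ b ∈ B ∧ 1 ≤ i ∧ b + (i : ℤ) * (n : ℤ) < a ∧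
    a - (i : ℤ) * (n : ℤ) ∉ B ∧ b + (i : ℤ) * (n : ℤ) ∉ B ∧
    B' = (B \ {a, b}) ∪ {a - (i : ℤ) * (n : ℤ), b + (i : ℤ) * (n : ℤ)}

/-- The Jantzen order `λ ≥_{J_n} μ` on partitions. -/
def JantzenGE (n : ℕ) (lam mu : YPartition) : Prop :=
  ∃ s : ℤ, Relation.ReflTransGen (StepN n) (betaSet lam s) (betaSet mu s)

def JantzenGT (n : ℕ) (lam mu : YPartition) : Prop := JantzenGE n lam mu ∧ lam ≠ mu

/-- `n = n_1 + ⋯ + n_r`. -/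
def nTot {r : ℕ} (nn : Fin r → ℕ) : ℕ := ∑ k, nn k

/-- `σ_{j-1} = n_1 + ⋯ + n_{j-1}` (the sum of the entries before index `j`). -/
def sigBefore {r : ℕ} (nn : Fin r → ℕ) (j : Fin r) : ℕ :=
  ∑ k ∈ Finset.univ.filter (fun k : Fin r => (k : ℕ) < (j : ℕ)), nn k

/-- `X^𝐧_{i,j}(B) = {x − in − σ_{j−1} : x ∈ B ∩ ℤ^𝐧_{i,j}}`. -/
def Xset {r : ℕ} (nn : Fin r → ℕ) (B : Set ℤ) (i : ℤ) (j : Fin r) : Set ℤ :=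
  {y : ℤ | ∃ x ∈ B, (sigBefore nn j : ℤ) ≤ x - i * (nTot nn : ℤ) ∧
    x - i * (nTot nn : ℤ) < (sigBefore nn j : ℤ) + (nn j : ℤ) ∧
    y = x - i * (nTot nn : ℤ) - (sigBefore nn j : ℤ)}

/-- `𝚝^𝐧_B (i,j) = |X^𝐧_{i,j}(B)|`. -/
noncomputable def tfun {r : ℕ} (nn : Fin r → ℕ) (B : Set ℤ) : ℤ × Fin r → ℕ :=
  fun p => (Xset nn B p.1 p.2).ncard

/-- Membership in `T_𝐧`. -/
def memT {r : ℕ} (nn : Fin r → ℕ) (t : ℤ × Fin r → ℕ) : Prop :=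
  (∀ p : ℤ × Fin r, t p ≤ nn p.2) ∧
  {p : ℤ × Fin r | 0 ≤ p.1 ∧ t p ≠ 0}.Finite ∧
  {p : ℤ × Fin r | p.1 < 0 ∧ t p ≠ nn p.2}.Finite

/-- `𝔰(𝐭)`. -/
noncomputable def sT {r : ℕ} (nn : Fin r → ℕ) (t : ℤ × Fin r → ℕ) : ℤ :=
  (∑ᶠ p ∈ {p : ℤ × Fin r | 0 ≤ p.1}, (t p : ℤ)) -
  (∑ᶠ p ∈ {p : ℤ × Fin r | p.1 < 0}, ((nn p.2 : ℤ) - (t p : ℤ)))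

/-- `B_𝐭`, determined by `X^𝐧_{i,j}(B_𝐭) = {0, …, 𝐭(i,j) − 1}`. -/
def Bt {r : ℕ} (nn : Fin r → ℕ) (t : ℤ × Fin r → ℕ) : Set ℤ :=
  {x : ℤ | ∃ i : ℤ, ∃ j : Fin r,
    i * (nTot nn : ℤ) + (sigBefore nn j : ℤ) ≤ x ∧
    x < i * (nTot nn : ℤ) + (sigBefore nn j : ℤ) + (t (i, j) : ℤ)}

/-- One-runner version: `X^{(m)}_i(B)`. -/
def X1 (m : ℕ) (B : Set ℤ) (i : ℤ) : Set ℤ :=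
  {y : ℤ | ∃ x ∈ B, i * (m : ℤ) ≤ x ∧ x < (i + 1) * (m : ℤ) ∧ y = x - i * (m : ℤ)}

noncomputable def tfun1 (m : ℕ) (B : Set ℤ) : ℤ → ℕ := fun i => (X1 m B i).ncard

def memT1 (m : ℕ) (t : ℤ → ℕ) : Prop :=
  (∀ i : ℤ, t i ≤ m) ∧ {i : ℤ | 0 ≤ i ∧ t i ≠ 0}.Finite ∧ {i : ℤ | i < 0 ∧ t i ≠ m}.Finite

noncomputable def sT1 (m : ℕ) (t : ℤ → ℕ) : ℤ :=
  (∑ᶠ i ∈ {i : ℤ | 0 ≤ i}, (t i : ℤ)) - (∑ᶠ i ∈ {i : ℤ | i < 0}, ((m : ℤ) - (t i : ℤ)))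

/-- The strict partial order on `T_𝐧`. -/
def Tgt {r : ℕ} (nn : Fin r → ℕ) (t t' : ℤ × Fin r → ℕ) : Prop :=
  sT nn t = sT nn t' ∧
  ∃ i0 : ℤ, ∃ j0 : Fin r, t' (i0, j0) < t (i0, j0) ∧
    ∀ (i : ℤ) (j : Fin r), (i0 < i ∨ (i = i0 ∧ (j0 : ℕ) < (j : ℕ))) → t (i, j) = t' (i, j)

def Tge {r : ℕ} (nn : Fin r → ℕ) (t t' : ℤ × Fin r → ℕ) : Prop := t = t' ∨ Tgt nn t t'

/-- `m_c` from Statement 5. -/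
noncomputable def mcount (lam : YPartition) (s : ℤ) (n : ℕ) (c : ℕ) : ℤ :=
  ({i : ℤ | 0 ≤ i ∧ (c : ℤ) + i * (n : ℤ) ∈ betaSet lam s}.ncard : ℤ) -
  ({i : ℤ | i < 0 ∧ (c : ℤ) + i * (n : ℤ) ∉ betaSet lam s}.ncard : ℤ)

/-- `C = ⋃_{c<n} {c + in : i < m_c}` from Statement 5. -/
def coreSet (lam : YPartition) (s : ℤ) (n : ℕ) : Set ℤ :=
  {y : ℤ | ∃ c : ℕ, c < n ∧ ∃ i : ℤ, i < mcount lam s n c ∧ y = (c : ℤ) + i * (n : ℤ)}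

/-- The projection `π_𝐭` of the free module `𝔉` onto the span of `{s(λ) : λ ∈ 𝒫_𝐭}`. -/
noncomputable def proj {R : Type*} [Semiring R] {T : Type*} (ind : YPartition → T) (t : T)
    (v : YPartition →₀ R) : YPartition →₀ R := by
  classical
  exact Finsupp.onFinset v.support (fun mu => if ind mu = t then v mu else 0) <| by
    intro mu h
    rw [Finsupp.mem_support_iff]
    intro hv
    apply h
    simp [hv]

section Aux17

variable {r : ℕ}

/-- The map `B ↦ (B_1, …, B_r)`. -/
def Phi17 (nn : Fin r → ℕ) (B : Set ℤ) : Fin r → Set ℤ :=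
  fun j => {y : ℤ | ∃ i : ℤ, ∃ x ∈ Xset nn B i j, y = x + i * (nn j : ℤ)}

/-- The inverse map. -/
def Psi17 (nn : Fin r → ℕ) (F : Fin r → Set ℤ) : Set ℤ :=
  {x : ℤ | ∃ i : ℤ, ∃ j : Fin r, (sigBefore nn j : ℤ) ≤ x - i * (nTot nn : ℤ) ∧
    x - i * (nTot nn : ℤ) < (sigBefore nn j : ℤ) + (nn j : ℤ) ∧
    x - i * (nTot nn : ℤ) - (sigBefore nn j : ℤ) + i * (nn j : ℤ) ∈ F j}

lemma filter_lt_succ (nn : Fin r → ℕ) (j : Fin r) :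
    (Finset.univ.filter fun l : Fin r => (l : ℕ) < (j : ℕ) + 1) =
      insert j (Finset.univ.filter fun l : Fin r => (l : ℕ) < (j : ℕ)) := by
  ext l
  simp only [Finset.mem_filter, Finset.mem_univ, true_and, Finset.mem_insert]
  constructor
  · intro h
    rcases Nat.lt_succ_iff_lt_or_eq.mp h with h | h
    · exact Or.inr h
    · exact Or.inl (Fin.ext h)
  · rintro (rfl | h) <;> omega

lemma sig_succ (nn : Fin r → ℕ) (j k : Fin r) (h : (k : ℕ) = (j : ℕ) + 1) :
    sigBefore nn k = sigBefore nn j + nn j := by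
  unfold sigBefore
  rw [h, filter_lt_succ nn j, Finset.sum_insert (by simp)]
  omega

lemma sig_last (nn : Fin r → ℕ) (j : Fin r) (h : (j : ℕ) + 1 = r) :
    sigBefore nn j + nn j = nTot nn := by
  unfold sigBefore nTot
  rw [add_comm, ← Finset.sum_insert (s := Finset.univ.filter fun l : Fin r => (l : ℕ) < (j : ℕ))
    (by simp)]
  apply Finset.sum_congr _ (fun _ _ => rfl)
  ext l
  simp only [Finset.mem_insert, Finset.mem_filter, Finset.mem_univ, true_and, iff_true]
  have := l.isLt
  by_cases hl : l = j
  · exact Or.inl hl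
  · refine Or.inr ?_
    have : (l : ℕ) ≠ (j : ℕ) := fun hc => hl (Fin.ext hc)
    omega

lemma sig_mono (nn : Fin r → ℕ) {j k : Fin r} (h : (j : ℕ) < (k : ℕ)) :
    sigBefore nn j + nn j ≤ sigBefore nn k := by
  unfold sigBefore
  rw [add_comm, ← Finset.sum_insert (s := Finset.univ.filter fun l : Fin r => (l : ℕ) < (j : ℕ))
    (by simp)]
  apply Finset.sum_le_sum_of_subset
  intro l hl
  simp only [Finset.mem_insert, Finset.mem_filter, Finset.mem_univ, true_and] at hl ⊢
  rcases hl with rfl | hl <;> omega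

lemma sig_add_le (nn : Fin r → ℕ) (j : Fin r) : sigBefore nn j + nn j ≤ nTot nn := by
  unfold sigBefore nTot
  rw [add_comm, ← Finset.sum_insert (s := Finset.univ.filter fun l : Fin r => (l : ℕ) < (j : ℕ))
    (by simp)]
  exact Finset.sum_le_sum_of_subset (fun l _ => Finset.mem_univ l)

lemma block_uniq (nn : Fin r → ℕ) {d : ℤ} {j k : Fin r}
    (hj1 : (sigBefore nn j : ℤ) ≤ d) (hj2 : d < (sigBefore nn j : ℤ) + (nn j : ℤ))
    (hk1 : (sigBefore nn k : ℤ) ≤ d) (hk2 : d < (sigBefore nn k : ℤ) + (nn k : ℤ)) :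
    j = k := by
  rcases lt_trichotomy ((j : ℕ)) ((k : ℕ)) with h | h | h
  · exfalso
    have h2 := sig_mono nn h
    have h3 : ((sigBefore nn j : ℕ) : ℤ) + (nn j : ℤ) ≤ (sigBefore nn k : ℤ) := by
      exact_mod_cast h2
    omega
  · exact Fin.ext h
  · exfalso
    have h2 := sig_mono nn h
    have h3 : ((sigBefore nn k : ℕ) : ℤ) + (nn k : ℤ) ≤ (sigBefore nn j : ℤ) := by
      exact_mod_cast h2
    omega

lemma exists_block (nn : Fin r → ℕ) {d : ℤ} (h0 : 0 ≤ d) (h1 : d < (nTot nn : ℤ)) :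
    ∃ j : Fin r, (sigBefore nn j : ℤ) ≤ d ∧ d < (sigBefore nn j : ℤ) + (nn j : ℤ) := by
  have hr : 0 < r := by
    rcases Nat.eq_zero_or_pos r with rfl | h
    · exfalso
      have : nTot nn = 0 := by simp [nTot]
      omega
    · exact h
  classical
  set S : Finset (Fin r) := Finset.univ.filter fun j => (sigBefore nn j : ℤ) ≤ d with hS
  have hne : S.Nonempty := by
    refine ⟨⟨0, hr⟩, ?_⟩
    simp only [hS, Finset.mem_filter, Finset.mem_univ, true_and]
    have hz : sigBefore nn ⟨0, hr⟩ = 0 := by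
      unfold sigBefore
      rw [Finset.filter_false_of_mem, Finset.sum_empty]
      intro l _
      simp
    rw [hz]
    exact_mod_cast h0
  obtain ⟨j, hjS, hjmax⟩ := S.exists_max_image (fun j => (j : ℕ)) hne
  simp only [hS, Finset.mem_filter, Finset.mem_univ, true_and] at hjS
  refine ⟨j, hjS, ?_⟩
  by_contra hcon
  push_neg at hcon
  rcases Nat.lt_or_ge ((j : ℕ) + 1) r with hlt | hge
  · set k : Fin r := ⟨(j : ℕ) + 1, hlt⟩ with hk
    have hsk : sigBefore nn k = sigBefore nn j + nn j := sig_succ nn j k rfl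
    have hkS : k ∈ S := by
      simp only [hS, Finset.mem_filter, Finset.mem_univ, true_and, hsk]
      push_cast
      omega
    have := hjmax k hkS
    simp [hk] at this
  · have hr1 : (j : ℕ) + 1 = r := by have := j.isLt; omega
    have h2 := sig_last nn j hr1
    have h3 : ((sigBefore nn j : ℕ) : ℤ) + (nn j : ℤ) = (nTot nn : ℤ) := by exact_mod_cast h2
    omega

/-- unique quotient-remainder -/
lemma quot_uniq {m z z' i i' : ℤ} (hm : 0 < m) (hz : 0 ≤ z) (hz' : z < m)
    (hw : 0 ≤ z') (hw' : z' < m) (h : z + i * m = z' + i' * m) : i = i' ∧ z = z' := by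
  have hii : i = i' := by
    rcases lt_trichotomy i i' with hc | hc | hc
    · exfalso
      have : (i + 1) * m ≤ i' * m := mul_le_mul_of_nonneg_right (by omega) hm.le
      nlinarith
    · exact hc
    · exfalso
      have : (i' + 1) * m ≤ i * m := mul_le_mul_of_nonneg_right (by omega) hm.le
      nlinarith
  subst hii
  exact ⟨rfl, by omega⟩

lemma exists_quot {m : ℤ} (hm : 0 < m) (y : ℤ) : ∃ i : ℤ, 0 ≤ y - i * m ∧ y - i * m < m := by
  refine ⟨y / m, ?_, ?_⟩
  · have h := Int.emod_nonneg y hm.ne'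
    rw [Int.emod_def] at h
    linarith [h, (by ring : y - m * (y / m) = y - y / m * m)]
  · have h := Int.emod_lt_of_pos y hm
    rw [Int.emod_def] at h
    linarith [h, (by ring : y - m * (y / m) = y - y / m * m)]

lemma mem_Xset_iff (nn : Fin r → ℕ) (B : Set ℤ) (i : ℤ) (j : Fin r) (z : ℤ) :
    z ∈ Xset nn B i j ↔ 0 ≤ z ∧ z < (nn j : ℤ) ∧
      z + i * (nTot nn : ℤ) + (sigBefore nn j : ℤ) ∈ B := by
  constructor
  · rintro ⟨x, hxB, h1, h2, rfl⟩
    refine ⟨by omega, by omega, ?_⟩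
    have hx : x - i * (nTot nn : ℤ) - (sigBefore nn j : ℤ) + i * (nTot nn : ℤ)
        + (sigBefore nn j : ℤ) = x := by ring
    rw [hx]
    exact hxB
  · rintro ⟨h0, h1, hB⟩
    exact ⟨z + i * (nTot nn : ℤ) + (sigBefore nn j : ℤ), hB, by omega, by omega, by ring⟩

lemma mem_X1_iff (m : ℕ) (C : Set ℤ) (i z : ℤ) :
    z ∈ X1 m C i ↔ 0 ≤ z ∧ z < (m : ℤ) ∧ z + i * (m : ℤ) ∈ C := by
  constructor
  · rintro ⟨x, hx, h1, h2, rfl⟩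
    refine ⟨by omega, by nlinarith, ?_⟩
    rw [show x - i * (m : ℤ) + i * m = x by ring]
    exact hx
  · rintro ⟨h0, h1, hC⟩
    exact ⟨z + i * (m : ℤ), hC, by omega, by nlinarith, by ring⟩

lemma mem_Phi17_iff (nn : Fin r → ℕ) (hpos : ∀ j, 0 < nn j) (B : Set ℤ) (j : Fin r)
    {z i : ℤ} (h0 : 0 ≤ z) (h1 : z < (nn j : ℤ)) :
    z + i * (nn j : ℤ) ∈ Phi17 nn B j ↔ z ∈ Xset nn B i j := by
  constructor
  · rintro ⟨i', x, hx, hy⟩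
    have hx0 := (mem_Xset_iff nn B i' j x).mp hx
    have hm : (0 : ℤ) < (nn j : ℤ) := by exact_mod_cast hpos j
    obtain ⟨hii, hzz⟩ := quot_uniq hm h0 h1 hx0.1 hx0.2.1 hy
    subst hii; subst hzz; exact hx
  · intro hz
    exact ⟨i, z, hz, rfl⟩

lemma X1_Phi17 (nn : Fin r → ℕ) (hpos : ∀ j, 0 < nn j) (B : Set ℤ) (i : ℤ) (j : Fin r) :
    X1 (nn j) (Phi17 nn B j) i = Xset nn B i j := by
  ext z
  rw [mem_X1_iff]
  constructor
  · rintro ⟨h0, h1, hP⟩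
    exact (mem_Phi17_iff nn hpos B j h0 h1).mp hP
  · intro hz
    have hz' := (mem_Xset_iff nn B i j z).mp hz
    exact ⟨hz'.1, hz'.2.1, (mem_Phi17_iff nn hpos B j hz'.1 hz'.2.1).mpr hz⟩

lemma blockP_uniq (nn : Fin r → ℕ) (hn : 0 < nTot nn) {x : ℤ} {i i' : ℤ} {j j' : Fin r}
    (h1 : (sigBefore nn j : ℤ) ≤ x - i * (nTot nn : ℤ))
    (h2 : x - i * (nTot nn : ℤ) < (sigBefore nn j : ℤ) + (nn j : ℤ))
    (h3 : (sigBefore nn j' : ℤ) ≤ x - i' * (nTot nn : ℤ))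
    (h4 : x - i' * (nTot nn : ℤ) < (sigBefore nn j' : ℤ) + (nn j' : ℤ)) :
    i = i' ∧ j = j' := by
  have hN : (0 : ℤ) < (nTot nn : ℤ) := by exact_mod_cast hn
  have hb : ((sigBefore nn j : ℕ) : ℤ) + (nn j : ℤ) ≤ (nTot nn : ℤ) := by
    exact_mod_cast sig_add_le nn j
  have hb' : ((sigBefore nn j' : ℕ) : ℤ) + (nn j' : ℤ) ≤ (nTot nn : ℤ) := by
    exact_mod_cast sig_add_le nn j'
  have hs0 : (0 : ℤ) ≤ (sigBefore nn j : ℤ) := Int.natCast_nonneg _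
  have hs0' : (0 : ℤ) ≤ (sigBefore nn j' : ℤ) := Int.natCast_nonneg _
  have hii : i = i' := (quot_uniq hN (z := x - i * (nTot nn : ℤ))
    (z' := x - i' * (nTot nn : ℤ)) (by omega) (by omega) (by omega) (by omega) (by ring)).1
  subst hii
  exact ⟨rfl, block_uniq nn h1 h2 h3 h4⟩

lemma exists_blockP (nn : Fin r → ℕ) (hn : 0 < nTot nn) (x : ℤ) :
    ∃ i : ℤ, ∃ j : Fin r, (sigBefore nn j : ℤ) ≤ x - i * (nTot nn : ℤ) ∧
      x - i * (nTot nn : ℤ) < (sigBefore nn j : ℤ) + (nn j : ℤ) := by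
  have hN : (0 : ℤ) < (nTot nn : ℤ) := by exact_mod_cast hn
  obtain ⟨i, hi0, hi1⟩ := exists_quot hN x
  obtain ⟨j, hj0, hj1⟩ := exists_block nn hi0 hi1
  exact ⟨i, j, hj0, hj1⟩

lemma Psi17_Phi17 (nn : Fin r → ℕ) (hpos : ∀ j, 0 < nn j) (hn : 0 < nTot nn) (B : Set ℤ) :
    Psi17 nn (Phi17 nn B) = B := by
  ext x
  constructor
  · rintro ⟨i, j, hb1, hb2, hmem⟩
    have h0 : 0 ≤ x - i * (nTot nn : ℤ) - (sigBefore nn j : ℤ) := by omega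
    have h1 : x - i * (nTot nn : ℤ) - (sigBefore nn j : ℤ) < (nn j : ℤ) := by omega
    have hz := (mem_Phi17_iff nn hpos B j h0 h1).mp hmem
    have := (mem_Xset_iff nn B i j _).mp hz
    have hx : x - i * (nTot nn : ℤ) - (sigBefore nn j : ℤ) + i * (nTot nn : ℤ)
        + (sigBefore nn j : ℤ) = x := by ring
    rw [hx] at this
    exact this.2.2
  · intro hxB
    obtain ⟨i, j, hb1, hb2⟩ := exists_blockP nn hn x
    refine ⟨i, j, hb1, hb2, ?_⟩
    have h0 : 0 ≤ x - i * (nTot nn : ℤ) - (sigBefore nn j : ℤ) := by omega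
    have h1 : x - i * (nTot nn : ℤ) - (sigBefore nn j : ℤ) < (nn j : ℤ) := by omega
    refine (mem_Phi17_iff nn hpos B j h0 h1).mpr ?_
    refine (mem_Xset_iff nn B i j _).mpr ⟨h0, h1, ?_⟩
    have hx : x - i * (nTot nn : ℤ) - (sigBefore nn j : ℤ) + i * (nTot nn : ℤ)
        + (sigBefore nn j : ℤ) = x := by ring
    rw [hx]
    exact hxB

lemma Xset_Psi17 (nn : Fin r → ℕ) (hn : 0 < nTot nn) (F : Fin r → Set ℤ) (i : ℤ) (j : Fin r) :
    Xset nn (Psi17 nn F) i j = X1 (nn j) (F j) i := by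
  have hb : ((sigBefore nn j : ℕ) : ℤ) + (nn j : ℤ) ≤ (nTot nn : ℤ) := by
    exact_mod_cast sig_add_le nn j
  have hs0 : (0 : ℤ) ≤ (sigBefore nn j : ℤ) := Int.natCast_nonneg _
  ext z
  rw [mem_Xset_iff, mem_X1_iff]
  set x := z + i * (nTot nn : ℤ) + (sigBefore nn j : ℤ) with hxdef
  constructor
  · rintro ⟨h0, h1, i2, j2, hc1, hc2, hc3⟩
    have hb1 : (sigBefore nn j : ℤ) ≤ x - i * (nTot nn : ℤ) := by omega
    have hb2 : x - i * (nTot nn : ℤ) < (sigBefore nn j : ℤ) + (nn j : ℤ) := by omega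
    obtain ⟨hii, hjj⟩ := blockP_uniq nn hn hc1 hc2 hb1 hb2
    rw [hii, hjj] at hc3
    refine ⟨h0, h1, ?_⟩
    have hx : x - i * (nTot nn : ℤ) - (sigBefore nn j : ℤ) + i * (nn j : ℤ)
        = z + i * (nn j : ℤ) := by rw [hxdef]; ring
    rw [hx] at hc3
    exact hc3
  · rintro ⟨h0, h1, hF⟩
    refine ⟨h0, h1, i, j, by omega, by omega, ?_⟩
    have hx : x - i * (nTot nn : ℤ) - (sigBefore nn j : ℤ) + i * (nn j : ℤ)
        = z + i * (nn j : ℤ) := by rw [hxdef]; ring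
    rw [hx]
    exact hF

lemma Phi17_Psi17 (nn : Fin r → ℕ) (hpos : ∀ j, 0 < nn j) (hn : 0 < nTot nn)
    (F : Fin r → Set ℤ) : Phi17 nn (Psi17 nn F) = F := by
  funext j
  ext y
  have hm : (0 : ℤ) < (nn j : ℤ) := by exact_mod_cast hpos j
  constructor
  · rintro ⟨i, z, hz, rfl⟩
    rw [Xset_Psi17 nn hn, mem_X1_iff] at hz
    obtain ⟨h0, h1, hF⟩ := hz
    exact hF
  · intro hy
    obtain ⟨i, h0, h1⟩ := exists_quot hm y
    refine ⟨i, y - i * (nn j : ℤ), ?_, by ring⟩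
    rw [Xset_Psi17 nn hn, mem_X1_iff]
    refine ⟨h0, h1, ?_⟩
    rw [show y - i * (nn j : ℤ) + i * (nn j : ℤ) = y by ring]
    exact hy

end Aux17
section Aux17b

variable {r : ℕ}

lemma X1_subset_Ico (m : ℕ) (C : Set ℤ) (i : ℤ) : X1 m C i ⊆ Set.Ico 0 (m : ℤ) := by
  intro z hz
  rw [mem_X1_iff] at hz
  exact Set.mem_Ico.mpr ⟨hz.1, hz.2.1⟩

lemma Xset_subset_Ico (nn : Fin r → ℕ) (B : Set ℤ) (i : ℤ) (j : Fin r) :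
    Xset nn B i j ⊆ Set.Ico 0 (nn j : ℤ) := by
  intro z hz
  rw [mem_Xset_iff] at hz
  exact Set.mem_Ico.mpr ⟨hz.1, hz.2.1⟩

lemma ncard_Ico0 (m : ℕ) : (Set.Ico (0 : ℤ) (m : ℤ)).ncard = m := by
  rw [← Finset.coe_Ico, Set.ncard_coe_finset, Int.card_Ico]
  simp

lemma X1_eq_Ico_of_ncard (m : ℕ) (C : Set ℤ) (i : ℤ) (h : (X1 m C i).ncard = m) :
    X1 m C i = Set.Ico 0 (m : ℤ) :=
  Set.eq_of_subset_of_ncard_le (X1_subset_Ico m C i)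
    (by rw [ncard_Ico0, h]) (Set.finite_Ico _ _)

lemma Xset_eq_Ico_of_ncard (nn : Fin r → ℕ) (B : Set ℤ) (i : ℤ) (j : Fin r)
    (h : (Xset nn B i j).ncard = nn j) : Xset nn B i j = Set.Ico 0 (nn j : ℤ) :=
  Set.eq_of_subset_of_ncard_le (Xset_subset_Ico nn B i j)
    (by rw [ncard_Ico0, h]) (Set.finite_Ico _ _)

lemma beta_of_tfun1 (m : ℕ) (hm : 0 < m) (C : Set ℤ)
    (h1 : {i : ℤ | 0 ≤ i ∧ tfun1 m C i ≠ 0}.Finite)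
    (h2 : {i : ℤ | i < 0 ∧ tfun1 m C i ≠ m}.Finite) : IsBetaSet C := by
  have hmz : (0 : ℤ) < (m : ℤ) := by exact_mod_cast hm
  constructor
  · apply Set.Finite.subset (Set.Finite.biUnion h1
      (fun i _ => Set.finite_Ico (i * (m : ℤ)) ((i + 1) * (m : ℤ))))
    rintro x ⟨hxC, hx0⟩
    obtain ⟨i, hq0, hq1⟩ := exists_quot hmz x
    have hi0 : 0 ≤ i := by
      by_contra hc
      push_neg at hc
      have : (i + 1) * (m : ℤ) ≤ 0 * (m : ℤ) := mul_le_mul_of_nonneg_right (by omega) hmz.le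
      simp only [Set.mem_setOf_eq] at hx0
      nlinarith
    have hmem : x - i * (m : ℤ) ∈ X1 m C i := by
      rw [mem_X1_iff]
      exact ⟨hq0, hq1, by rw [show x - i * (m : ℤ) + i * m = x by ring]; exact hxC⟩
    have hne : tfun1 m C i ≠ 0 := by
      intro hc
      have hfin : (X1 m C i).Finite := (Set.finite_Ico _ _).subset (X1_subset_Ico m C i)
      rw [show tfun1 m C i = (X1 m C i).ncard from rfl, Set.ncard_eq_zero hfin] at hc
      rw [hc] at hmem
      exact hmem
    exact Set.mem_biUnion (⟨hi0, hne⟩ : i ∈ {i : ℤ | 0 ≤ i ∧ tfun1 m C i ≠ 0})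
      (Set.mem_Ico.mpr ⟨by omega, by nlinarith⟩)
  · apply Set.Finite.subset (Set.Finite.biUnion h2
      (fun i _ => Set.finite_Ico (i * (m : ℤ)) ((i + 1) * (m : ℤ))))
    rintro x ⟨hx0, hxC⟩
    obtain ⟨i, hq0, hq1⟩ := exists_quot hmz x
    have hi0 : i < 0 := by
      by_contra hc
      push_neg at hc
      have : 0 * (m : ℤ) ≤ i * (m : ℤ) := mul_le_mul_of_nonneg_right hc hmz.le
      simp only [Set.mem_setOf_eq] at hx0
      nlinarith
    have hne : tfun1 m C i ≠ m := by
      intro hc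
      have := X1_eq_Ico_of_ncard m C i hc
      have hmem : x - i * (m : ℤ) ∈ X1 m C i := by
        rw [this]
        exact Set.mem_Ico.mpr ⟨hq0, hq1⟩
      rw [mem_X1_iff] at hmem
      rw [show x - i * (m : ℤ) + i * m = x by ring] at hmem
      exact hxC hmem.2.2
    exact Set.mem_biUnion (⟨hi0, hne⟩ : i ∈ {i : ℤ | i < 0 ∧ tfun1 m C i ≠ m})
      (Set.mem_Ico.mpr ⟨by omega, by nlinarith⟩)

lemma beta_of_tfun (nn : Fin r → ℕ) (hn : 0 < nTot nn) (B : Set ℤ)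
    (h1 : {p : ℤ × Fin r | 0 ≤ p.1 ∧ tfun nn B p ≠ 0}.Finite)
    (h2 : {p : ℤ × Fin r | p.1 < 0 ∧ tfun nn B p ≠ nn p.2}.Finite) : IsBetaSet B := by
  have hN : (0 : ℤ) < (nTot nn : ℤ) := by exact_mod_cast hn
  constructor
  · apply Set.Finite.subset (Set.Finite.biUnion h1
      (fun p _ => Set.finite_Ico (p.1 * (nTot nn : ℤ)) ((p.1 + 1) * (nTot nn : ℤ))))
    rintro x ⟨hxB, hx0⟩
    simp only [Set.mem_setOf_eq] at hx0
    obtain ⟨i, j, hb1, hb2⟩ := exists_blockP nn hn x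
    have hble : ((sigBefore nn j : ℕ) : ℤ) + (nn j : ℤ) ≤ (nTot nn : ℤ) := by
      exact_mod_cast sig_add_le nn j
    have hs0 : (0 : ℤ) ≤ (sigBefore nn j : ℤ) := Int.natCast_nonneg _
    have hxlo : i * (nTot nn : ℤ) ≤ x := by omega
    have hxhi : x < (i + 1) * (nTot nn : ℤ) := by
      have : x - i * (nTot nn : ℤ) < (nTot nn : ℤ) := by omega
      nlinarith
    have hi0 : 0 ≤ i := by
      by_contra hc
      push_neg at hc
      have : (i + 1) * (nTot nn : ℤ) ≤ 0 * (nTot nn : ℤ) :=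
        mul_le_mul_of_nonneg_right (by omega) hN.le
      nlinarith
    have hmem : x - i * (nTot nn : ℤ) - (sigBefore nn j : ℤ) ∈ Xset nn B i j := by
      rw [mem_Xset_iff]
      refine ⟨by omega, by omega, ?_⟩
      rw [show x - i * (nTot nn : ℤ) - (sigBefore nn j : ℤ) + i * (nTot nn : ℤ)
        + (sigBefore nn j : ℤ) = x by ring]
      exact hxB
    have hne : tfun nn B (i, j) ≠ 0 := by
      intro hc
      have hfin : (Xset nn B i j).Finite :=
        (Set.finite_Ico _ _).subset (Xset_subset_Ico nn B i j)
      rw [show tfun nn B (i, j) = (Xset nn B i j).ncard from rfl,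
        Set.ncard_eq_zero hfin] at hc
      rw [hc] at hmem
      exact hmem
    exact Set.mem_biUnion (⟨hi0, hne⟩ : (i, j) ∈ {p : ℤ × Fin r | 0 ≤ p.1 ∧ tfun nn B p ≠ 0})
      (Set.mem_Ico.mpr ⟨hxlo, hxhi⟩)
  · apply Set.Finite.subset (Set.Finite.biUnion h2
      (fun p _ => Set.finite_Ico (p.1 * (nTot nn : ℤ)) ((p.1 + 1) * (nTot nn : ℤ))))
    rintro x ⟨hx0, hxB⟩
    simp only [Set.mem_setOf_eq] at hx0
    obtain ⟨i, j, hb1, hb2⟩ := exists_blockP nn hn x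
    have hble : ((sigBefore nn j : ℕ) : ℤ) + (nn j : ℤ) ≤ (nTot nn : ℤ) := by
      exact_mod_cast sig_add_le nn j
    have hs0 : (0 : ℤ) ≤ (sigBefore nn j : ℤ) := Int.natCast_nonneg _
    have hxlo : i * (nTot nn : ℤ) ≤ x := by omega
    have hxhi : x < (i + 1) * (nTot nn : ℤ) := by
      have : x - i * (nTot nn : ℤ) < (nTot nn : ℤ) := by omega
      nlinarith
    have hi0 : i < 0 := by
      by_contra hc
      push_neg at hc
      have : 0 * (nTot nn : ℤ) ≤ i * (nTot nn : ℤ) := mul_le_mul_of_nonneg_right hc hN.le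
      nlinarith
    have hne : tfun nn B (i, j) ≠ nn j := by
      intro hc
      have heq := Xset_eq_Ico_of_ncard nn B i j hc
      have hmem : x - i * (nTot nn : ℤ) - (sigBefore nn j : ℤ) ∈ Xset nn B i j := by
        rw [heq]
        exact Set.mem_Ico.mpr ⟨by omega, by omega⟩
      rw [mem_Xset_iff] at hmem
      rw [show x - i * (nTot nn : ℤ) - (sigBefore nn j : ℤ) + i * (nTot nn : ℤ)
        + (sigBefore nn j : ℤ) = x by ring] at hmem
      exact hxB hmem.2.2
    exact Set.mem_biUnion
      (⟨hi0, hne⟩ : (i, j) ∈ {p : ℤ × Fin r | p.1 < 0 ∧ tfun nn B p ≠ nn p.2})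
      (Set.mem_Ico.mpr ⟨hxlo, hxhi⟩)

end Aux17b
/-- (1) Each `𝐭_j : i ↦ 𝐭(i,j)` lies in `T_{(n_j)}` and
`Σ_j 𝔰(𝐭_j) = 𝔰(𝐭)`; (2) `B ↦ (B_1, …, B_r)` with
`B_j = {x + i n_j : i ∈ ℤ, x ∈ X^𝐧_{i,j}(B)}` is a bijection from `𝔅_𝐭` onto
`𝔅_{𝐭_1} × ⋯ × 𝔅_{𝐭_r}`. -/
theorem statement17 (n r : ℕ) (hr : 0 < r) (nn : Fin r → ℕ) (hpos : ∀ j : Fin r, 0 < nn j)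
    (hsum : nTot nn = n) (t : ℤ × Fin r → ℕ) (ht : memT nn t) :
    (∀ j : Fin r, memT1 (nn j) (fun i : ℤ => t (i, j))) ∧
    (∑ j : Fin r, sT1 (nn j) (fun i : ℤ => t (i, j))) = sT nn t ∧
    Set.BijOn
      (fun (B : Set ℤ) (j : Fin r) =>
        {y : ℤ | ∃ i : ℤ, ∃ x ∈ Xset nn B i j, y = x + i * (nn j : ℤ)})
      {B : Set ℤ | IsBetaSet B ∧ tfun nn B = t}
      {F : Fin r → Set ℤ |
        ∀ j : Fin r, IsBetaSet (F j) ∧ tfun1 (nn j) (F j) = fun i : ℤ => t (i, j)} := by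
  classical
  have hn : 0 < nTot nn := by
    have h0 := hpos ⟨0, hr⟩
    have hle := Finset.single_le_sum (f := nn) (fun k _ => Nat.zero_le _)
      (Finset.mem_univ ⟨0, hr⟩)
    unfold nTot
    omega
  have part1 : ∀ j : Fin r, memT1 (nn j) (fun i : ℤ => t (i, j)) := by
    intro j
    refine ⟨fun i => ht.1 (i, j), ?_, ?_⟩
    · have he : {i : ℤ | 0 ≤ i ∧ t (i, j) ≠ 0} =
          (fun i : ℤ => (i, j)) ⁻¹' {p : ℤ × Fin r | 0 ≤ p.1 ∧ t p ≠ 0} := rfl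
      rw [he]
      exact ht.2.1.preimage (fun a _ b _ h => congrArg Prod.fst h)
    · have he : {i : ℤ | i < 0 ∧ t (i, j) ≠ nn j} =
          (fun i : ℤ => (i, j)) ⁻¹' {p : ℤ × Fin r | p.1 < 0 ∧ t p ≠ nn p.2} := rfl
      rw [he]
      exact ht.2.2.preimage (fun a _ b _ h => congrArg Prod.fst h)
  have part2 : (∑ j : Fin r, sT1 (nn j) (fun i : ℤ => t (i, j))) = sT nn t := by
    set A : Finset (ℤ × Fin r) := ht.2.1.toFinset with hA
    set Bn : Finset (ℤ × Fin r) := ht.2.2.toFinset with hBn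
    set I : Finset ℤ := A.image Prod.fst ∪ Bn.image Prod.fst with hIdef
    have hmemA : ∀ p : ℤ × Fin r, p ∈ A ↔ 0 ≤ p.1 ∧ t p ≠ 0 := by
      intro p
      rw [hA, Set.Finite.mem_toFinset]
      rfl
    have hmemB : ∀ p : ℤ × Fin r, p ∈ Bn ↔ p.1 < 0 ∧ t p ≠ nn p.2 := by
      intro p
      rw [hBn, Set.Finite.mem_toFinset]
      rfl
    have hIa : ∀ (i : ℤ) (j : Fin r), 0 ≤ i → t (i, j) ≠ 0 → i ∈ I := by
      intro i j h1 h2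
      exact Finset.mem_union_left _ (Finset.mem_image.mpr
        ⟨(i, j), (hmemA (i, j)).mpr ⟨h1, h2⟩, rfl⟩)
    have hIb : ∀ (i : ℤ) (j : Fin r), i < 0 → t (i, j) ≠ nn j → i ∈ I := by
      intro i j h1 h2
      exact Finset.mem_union_right _ (Finset.mem_image.mpr
        ⟨(i, j), (hmemB (i, j)).mpr ⟨h1, h2⟩, rfl⟩)
    have hSa : ∀ j : Fin r, (∑ᶠ i ∈ {i : ℤ | 0 ≤ i}, (t (i, j) : ℤ)) =
        ∑ i ∈ I, (if 0 ≤ i then (t (i, j) : ℤ) else 0) := by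
      intro j
      rw [finsum_mem_eq_sum_of_inter_support_eq _
        (t := I.filter fun i : ℤ => 0 ≤ i ∧ t (i, j) ≠ 0), Finset.sum_filter]
      · apply Finset.sum_congr rfl
        intro i _
        by_cases h1 : (0 : ℤ) ≤ i
        · by_cases h2 : t (i, j) = 0
          · simp [h1, h2]
          · simp [h1, h2]
        · simp [h1]
      · ext i
        constructor
        · rintro ⟨h1, h2⟩
          have h2' : t (i, j) ≠ 0 := by simpa using h2
          exact ⟨Finset.mem_coe.mpr (Finset.mem_filter.mpr ⟨hIa i j h1 h2', h1, h2'⟩), h2⟩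
        · rintro ⟨hf, h2⟩
          obtain ⟨_, h1, _⟩ := Finset.mem_filter.mp (Finset.mem_coe.mp hf)
          exact ⟨h1, h2⟩
    have hSb : ∀ j : Fin r, (∑ᶠ i ∈ {i : ℤ | i < 0}, ((nn j : ℤ) - (t (i, j) : ℤ))) =
        ∑ i ∈ I, (if i < 0 then ((nn j : ℤ) - (t (i, j) : ℤ)) else 0) := by
      intro j
      rw [finsum_mem_eq_sum_of_inter_support_eq _
        (t := I.filter fun i : ℤ => i < 0 ∧ t (i, j) ≠ nn j), Finset.sum_filter]
      · apply Finset.sum_congr rfl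
        intro i _
        by_cases h1 : i < 0
        · by_cases h2 : t (i, j) = nn j
          · simp [h1, h2]
          · simp [h1, h2]
        · simp [h1]
      · ext i
        constructor
        · rintro ⟨h1, h2⟩
          have h2' : t (i, j) ≠ nn j := fun hc => h2 (by simp [hc])
          exact ⟨Finset.mem_coe.mpr (Finset.mem_filter.mpr ⟨hIb i j h1 h2', h1, h2'⟩), h2⟩
        · rintro ⟨hf, h2⟩
          obtain ⟨_, h1, _⟩ := Finset.mem_filter.mp (Finset.mem_coe.mp hf)
          exact ⟨h1, h2⟩
    have hTa : (∑ᶠ p ∈ {p : ℤ × Fin r | 0 ≤ p.1}, (t p : ℤ)) =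
        ∑ i ∈ I, ∑ j : Fin r, (if 0 ≤ i then (t (i, j) : ℤ) else 0) := by
      rw [finsum_mem_eq_sum_of_inter_support_eq _
        (t := (I ×ˢ Finset.univ).filter fun p : ℤ × Fin r => 0 ≤ p.1 ∧ t p ≠ 0),
        Finset.sum_filter, Finset.sum_product]
      · apply Finset.sum_congr rfl
        intro i _
        apply Finset.sum_congr rfl
        intro j _
        by_cases h1 : (0 : ℤ) ≤ i
        · by_cases h2 : t (i, j) = 0
          · simp [h1, h2]
          · simp [h1, h2]
        · simp [h1]
      · ext p
        constructor
        · rintro ⟨h1, h2⟩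
          have h2' : t p ≠ 0 := by simpa using h2
          refine ⟨Finset.mem_coe.mpr (Finset.mem_filter.mpr ⟨?_, h1, h2'⟩), h2⟩
          exact Finset.mem_product.mpr ⟨hIa p.1 p.2 h1 (by rw [Prod.mk.eta]; exact h2'),
            Finset.mem_univ _⟩
        · rintro ⟨hf, h2⟩
          obtain ⟨_, h1, _⟩ := Finset.mem_filter.mp (Finset.mem_coe.mp hf)
          exact ⟨h1, h2⟩
    have hTb : (∑ᶠ p ∈ {p : ℤ × Fin r | p.1 < 0}, ((nn p.2 : ℤ) - (t p : ℤ))) =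
        ∑ i ∈ I, ∑ j : Fin r, (if i < 0 then ((nn j : ℤ) - (t (i, j) : ℤ)) else 0) := by
      rw [finsum_mem_eq_sum_of_inter_support_eq _
        (t := (I ×ˢ Finset.univ).filter fun p : ℤ × Fin r => p.1 < 0 ∧ t p ≠ nn p.2),
        Finset.sum_filter, Finset.sum_product]
      · apply Finset.sum_congr rfl
        intro i _
        apply Finset.sum_congr rfl
        intro j _
        by_cases h1 : i < 0
        · by_cases h2 : t (i, j) = nn j
          · simp [h1, h2]
          · simp [h1, h2]
        · simp [h1]
      · ext p
        constructor
        · rintro ⟨h1, h2⟩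
          have h2' : t p ≠ nn p.2 := fun hc => h2 (by simp [hc])
          refine ⟨Finset.mem_coe.mpr (Finset.mem_filter.mpr ⟨?_, h1, h2'⟩), h2⟩
          exact Finset.mem_product.mpr ⟨hIb p.1 p.2 h1 (by rw [Prod.mk.eta]; exact h2'),
            Finset.mem_univ _⟩
        · rintro ⟨hf, h2⟩
          obtain ⟨_, h1, _⟩ := Finset.mem_filter.mp (Finset.mem_coe.mp hf)
          exact ⟨h1, h2⟩
    unfold sT1 sT
    rw [hTa, hTb]
    calc (∑ j : Fin r, ((∑ᶠ i ∈ {i : ℤ | 0 ≤ i}, (t (i, j) : ℤ)) -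
            ∑ᶠ i ∈ {i : ℤ | i < 0}, ((nn j : ℤ) - (t (i, j) : ℤ))))
        = (∑ j : Fin r, ∑ i ∈ I, (if 0 ≤ i then (t (i, j) : ℤ) else 0)) -
            ∑ j : Fin r, ∑ i ∈ I, (if i < 0 then ((nn j : ℤ) - (t (i, j) : ℤ)) else 0) := by
          rw [← Finset.sum_sub_distrib]
          apply Finset.sum_congr rfl
          intro j _
          rw [hSa j, hSb j]
      _ = (∑ i ∈ I, ∑ j : Fin r, (if 0 ≤ i then (t (i, j) : ℤ) else 0)) -
            ∑ i ∈ I, ∑ j : Fin r, (if i < 0 then ((nn j : ℤ) - (t (i, j) : ℤ)) else 0) := by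
          exact congrArg₂ (· - ·) Finset.sum_comm Finset.sum_comm
  refine ⟨part1, part2, ?_⟩
  show Set.BijOn (Phi17 nn) _ _
  refine ⟨?_, ?_, ?_⟩
  · rintro B ⟨hB, htf⟩ j
    have htf1 : tfun1 (nn j) (Phi17 nn B j) = fun i : ℤ => t (i, j) := by
      funext i
      show (X1 (nn j) (Phi17 nn B j) i).ncard = t (i, j)
      rw [X1_Phi17 nn hpos B i j]
      exact congrFun htf (i, j)
    refine ⟨?_, htf1⟩
    apply beta_of_tfun1 (nn j) (hpos j)
    · have he : {i : ℤ | 0 ≤ i ∧ tfun1 (nn j) (Phi17 nn B j) i ≠ 0} =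
          {i : ℤ | 0 ≤ i ∧ t (i, j) ≠ 0} := by rw [htf1]
      rw [he]
      exact (part1 j).2.1
    · have he : {i : ℤ | i < 0 ∧ tfun1 (nn j) (Phi17 nn B j) i ≠ nn j} =
          {i : ℤ | i < 0 ∧ t (i, j) ≠ nn j} := by rw [htf1]
      rw [he]
      exact (part1 j).2.2
  · intro B _ B' _ h
    have h2 := congrArg (Psi17 nn) h
    rwa [Psi17_Phi17 nn hpos hn B, Psi17_Phi17 nn hpos hn B'] at h2
  · intro F hF
    have htf : tfun nn (Psi17 nn F) = t := by
      funext p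
      obtain ⟨i, j⟩ := p
      show (Xset nn (Psi17 nn F) i j).ncard = t (i, j)
      rw [Xset_Psi17 nn hn F i j]
      exact congrFun (hF j).2 i
    refine ⟨Psi17 nn F, ⟨?_, htf⟩, Phi17_Psi17 nn hpos hn F⟩
    apply beta_of_tfun nn hn
    · have he : {p : ℤ × Fin r | 0 ≤ p.1 ∧ tfun nn (Psi17 nn F) p ≠ 0} =
          {p : ℤ × Fin r | 0 ≤ p.1 ∧ t p ≠ 0} := by rw [htf]
      rw [he]
      exact ht.2.1
    · have he : {p : ℤ × Fin r | p.1 < 0 ∧ tfun nn (Psi17 nn F) p ≠ nn p.2} =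
          {p : ℤ × Fin r | p.1 < 0 ∧ t p ≠ nn p.2} := by rw [htf]
      rw [he]
      exact ht.2.2
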